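/- For s ≥ 2, define f_s(a) = ∑_{j≥0} (-1)^j C(s,j) max(a-2j,0)^{s-1} for integers a (with the convention c^{s-1} = 0 for c < 0). Then the generating function identity ∑_{a≥1} f_s(a) T^{a-1} = (1+T)^s · A_{s-1}(T) holds in ℤ[[T]]. -/

import Mathlib

open PowerSeries

/-- `f_s(a) = ∑_j (-1)^j C(s,j) (a-2j)^{s-1}`, with the convention that terms with
negative base `a - 2j < 0` are `0`. -/
def fMonsky (s : ℕ) (a : ℤ) : ℤ :=
  ∑ j ∈ Finset.range (s + 1), (-1) ^ j * (s.choose j) * (max (a - 2 * j) 0) ^ (s - 1)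

/-- For `s ≥ 2`, `∑_{a≥1} f_s(a) T^{a-1} = (1+T)^s · A_{s-1}(T)` in `ℤ[[T]]`, where
`A_{s-1}` is the Eulerian polynomial. -/
theorem fMonsky_genfun (s : ℕ) (hs : 2 ≤ s) (A : Polynomial ℤ)
    (hA : (A : PowerSeries ℤ) =
      (1 - X) ^ (s - 1 + 1) * PowerSeries.mk (fun k => ((k : ℤ) + 1) ^ (s - 1))) :
    (PowerSeries.mk (fun m => fMonsky s ((m : ℤ) + 1)) : PowerSeries ℤ)
      = (1 + X) ^ s * (A : PowerSeries ℤ) := by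
  have hs1 : s - 1 + 1 = s := by omega
  set g : PowerSeries ℤ := PowerSeries.mk (fun k => ((k : ℤ) + 1) ^ (s - 1)) with hg
  have h2 : ((1 + X : PowerSeries ℤ)) ^ s * ((1 - X) ^ s * g) = (1 - X ^ 2) ^ s * g := by
    rw [← mul_assoc, ← mul_pow]; ring_nf
  have h3 : ((1 - X ^ 2 : PowerSeries ℤ)) ^ s
      = ∑ j ∈ Finset.range (s + 1),
        (C ((-1) ^ j * (s.choose j : ℤ))) * X ^ (2 * j) := by
    rw [sub_eq_add_neg, add_comm, add_pow]
    apply Finset.sum_congr rfl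
    intro j hj
    rw [neg_pow, one_pow, ← pow_mul, map_mul, map_pow, map_natCast, map_neg, map_one]
    ring
  rw [hA, hs1, h2, h3, Finset.sum_mul]
  ext m
  rw [coeff_mk, map_sum]
  unfold fMonsky
  apply Finset.sum_congr rfl
  intro j hj
  rw [mul_right_comm (C ((-1) ^ j * (s.choose j : ℤ))) (X ^ (2 * j)) g, coeff_mul_X_pow']
  by_cases h : 2 * j ≤ m
  · rw [if_pos h, coeff_C_mul, coeff_mk]
    have hmax : max ((m : ℤ) + 1 - 2 * j) 0 = (m : ℤ) + 1 - 2 * j := by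
      rw [max_eq_left]; omega
    rw [hmax]
    have : ((m - 2 * j : ℕ) : ℤ) = (m : ℤ) - 2 * j := by omega
    rw [this]
    ring_nf
  · rw [if_neg h]
    have hmax : max ((m : ℤ) + 1 - 2 * j) 0 = 0 := by
      rw [max_eq_right]; omega
    rw [hmax, zero_pow (by omega), mul_zero]
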